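/- Let $(F_n)_{n \ge 0}$ be a real sequence with $\rho := \sum_{j=0}^{\infty} |F_j| < 1$, let $(f_n)$ be a real sequence converging to a limit $f_\infty$, and let $(x_n)$ satisfy the convolution Volterra difference equation $x_{n+1} = f_n + \sum_{j=0}^{n} F_{n-j} x_j$ for $n \ge 1$. Then $(x_n)$ converges, with $\lim_{n\to\infty} x_n = (1 - \sum_{j=0}^{\infty} F_j)^{-1} f_\infty$. -/

import Mathlib

open Filter

set_option maxHeartbeats 1600000 in
theorem volterra_convolution_limit
    (F f : ℕ → ℝ) (ρ : ℝ) (hρ : HasSum (fun j => |F j|) ρ) (hρ1 : ρ < 1)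
    (finf : ℝ) (hf : Tendsto f atTop (nhds finf))
    (x : ℕ → ℝ)
    (hx : ∀ n : ℕ, 1 ≤ n → x (n + 1) = f n + ∑ j ∈ Finset.range (n + 1), F (n - j) * x j) :
    Tendsto x atTop (nhds ((1 - ∑' j, F j)⁻¹ * finf)) := by
  have hρ0 : 0 ≤ ρ := hρ.nonneg fun j => abs_nonneg _
  have hFsum : Summable F := (Summable.of_abs hρ.summable)
  set S : ℝ := ∑' j, F j with hSdef
  have hS : HasSum F S := hFsum.hasSum
  have hSρ : S ≤ ρ := hasSum_le (fun i => le_abs_self _) hS hρ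
  have h1S : 0 < 1 - S := by linarith
  set L : ℝ := (1 - S)⁻¹ * finf with hLdef
  have hL1S : L * (1 - S) = finf := by
    rw [hLdef, mul_comm, ← mul_assoc, mul_inv_cancel₀ h1S.ne', one_mul]
  set e : ℕ → ℝ := fun n => x n - L with hedef
  set g : ℕ → ℝ := fun n => f n - L + L * ∑ i ∈ Finset.range (n + 1), F i with hgdef
  -- the error recursion
  have he : ∀ n : ℕ, 1 ≤ n →
      e (n + 1) = g n + ∑ j ∈ Finset.range (n + 1), F (n - j) * e j := by
    intro n hn
    have hrefl : ∑ j ∈ Finset.range (n + 1), F (n - j)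
        = ∑ i ∈ Finset.range (n + 1), F i := by
      simpa using Finset.sum_range_reflect (fun i => F i) (n + 1)
    have : ∑ j ∈ Finset.range (n + 1), F (n - j) * e j
        = ∑ j ∈ Finset.range (n + 1), F (n - j) * x j
          - L * ∑ i ∈ Finset.range (n + 1), F i := by
      rw [← hrefl, Finset.mul_sum, ← Finset.sum_sub_distrib]
      refine Finset.sum_congr rfl fun j hj => by simp [hedef]; ring
    rw [this, hgdef]
    simp only [hedef]
    rw [hx n hn]
    ring
  -- g tends to 0
  have hg : Tendsto g atTop (nhds 0) := by
    have hpartial : Tendsto (fun n => ∑ i ∈ Finset.range (n + 1), F i) atTop (nhds S) :=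
      hS.tendsto_sum_nat.comp (tendsto_add_atTop_nat 1)
    have := (hf.sub_const L).add (hpartial.const_mul L)
    have heq : finf - L + L * S = 0 := by
      have : L - L * S = finf := by linarith [hL1S]; 
      linarith
    simpa [hgdef, heq] using this
  -- bound on g
  obtain ⟨G, hG⟩ : ∃ G : ℝ, ∀ n, |g n| ≤ G := by
    have : BddAbove (Set.range fun n => |g n|) := (hg.abs.bddAbove_range)
    obtain ⟨G, hG⟩ := this
    exact ⟨G, fun n => hG (Set.mem_range_self n)⟩
  have hG0 : 0 ≤ G := le_trans (abs_nonneg _) (hG 0)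
  -- partial sum bounds
  have hpar : ∀ s : Finset ℕ, ∑ i ∈ s, |F i| ≤ ρ :=
    fun s => sum_le_hasSum s (fun i _ => abs_nonneg _) hρ
  -- uniform bound M on |e|
  set M : ℝ := max (max |e 0| |e 1|) (G / (1 - ρ)) with hMdef
  have hM0 : 0 ≤ M := le_trans (div_nonneg hG0 (by linarith)) (le_max_right _ _)
  have hGM : G + ρ * M ≤ M := by
    have hGm : G / (1 - ρ) ≤ M := le_max_right _ _
    have : G ≤ (1 - ρ) * M := by
      rw [div_le_iff₀ (by linarith)] at hGm
      linarith
    nlinarith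
  have hM : ∀ n, |e n| ≤ M := by
    intro n
    induction n using Nat.strong_induction_on with
    | _ n ih =>
      match n with
      | 0 => exact le_trans (le_max_left _ _) (le_max_left _ _)
      | 1 => exact le_trans (le_max_right _ _) (le_max_left _ _)
      | (m + 2) =>
        have hm1 : 1 ≤ m + 1 := Nat.le_add_left 1 m
        rw [he (m + 1) hm1]
        calc |g (m + 1) + ∑ j ∈ Finset.range (m + 2), F (m + 1 - j) * e j|
            ≤ |g (m + 1)| + |∑ j ∈ Finset.range (m + 2), F (m + 1 - j) * e j| :=
              abs_add_le _ _
          _ ≤ G + ∑ j ∈ Finset.range (m + 2), |F (m + 1 - j)| * M := by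
              refine add_le_add (hG _) (le_trans (Finset.abs_sum_le_sum_abs _ _) ?_)
              refine Finset.sum_le_sum fun j hj => ?_
              rw [abs_mul]
              exact mul_le_mul_of_nonneg_left
                (ih j (Finset.mem_range.mp hj)) (abs_nonneg _)
          _ = G + (∑ i ∈ Finset.range (m + 2), |F i|) * M := by
              rw [← Finset.sum_mul]
              congr 1
              congr 1
              simpa using Finset.sum_range_reflect (fun i => |F i|) (m + 2)
          _ ≤ G + ρ * M := by
              refine add_le_add (le_refl _) (mul_le_mul_of_nonneg_right (hpar _) hM0)
          _ ≤ M := hGM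
  -- tail sums tend to zero
  set T : ℕ → ℝ := fun m => ∑' i, |F (i + m)| with hTdef
  have hT : Tendsto T atTop (nhds 0) := by
    simpa [hTdef] using tendsto_sum_nat_add (fun i => |F i|)
  have hTtail : ∀ m n : ℕ, ∑ i ∈ Finset.Ico m (n + 1), |F i| ≤ T m := by
    intro m n
    rw [Finset.sum_Ico_eq_sum_range]
    have hsum : Summable fun i => |F (i + m)| := (summable_nat_add_iff m).2 hρ.summable
    calc ∑ k ∈ Finset.range (n + 1 - m), |F (m + k)|
        = ∑ k ∈ Finset.range (n + 1 - m), |F (k + m)| := by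
          refine Finset.sum_congr rfl fun k _ => by rw [Nat.add_comm]
      _ ≤ T m := hsum.sum_le_tsum _ (fun i _ => abs_nonneg _)
  -- key contraction step
  have Hkey : ∀ B : ℝ, (∀ᶠ n in atTop, |e n| ≤ B) →
      ∀ δ : ℝ, 0 < δ → ∀ᶠ n in atTop, |e n| ≤ ρ * B + δ := by
    intro B hB δ hδ
    obtain ⟨N₀, hN₀⟩ := eventually_atTop.mp hB
    -- smallness of error terms
    have hsmall : ∀ᶠ n in atTop, |g n| + M * T (n - N₀ + 1) < δ := by
      have h1 : Tendsto (fun n => |g n| + M * T (n - N₀ + 1)) atTop (nhds 0) := by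
        have h2 : Tendsto (fun n : ℕ => n - N₀ + 1) atTop atTop :=
          (tendsto_add_atTop_nat 1).comp (tendsto_sub_atTop_nat N₀)
        have := hg.abs.add ((hT.comp h2).const_mul M)
        simpa using this
      exact h1.eventually (gt_mem_nhds hδ)
    rw [eventually_atTop] at hsmall ⊢
    obtain ⟨N₁, hN₁⟩ := hsmall
    refine ⟨max (N₀ + 1) N₁ + 1, fun n hn => ?_⟩
    obtain ⟨m, rfl⟩ : ∃ m, n = m + 1 :=
      ⟨n - 1, by omega⟩
    have hmN₀ : N₀ ≤ m := by
      have := le_of_max_le_left (by omega : max (N₀ + 1) N₁ ≤ m)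
      omega
    have hmN₁ : N₁ ≤ m := le_of_max_le_right (by omega : max (N₀ + 1) N₁ ≤ m)
    have hm1 : 1 ≤ m := by omega
    rw [he m hm1]
    have hrefl : ∑ j ∈ Finset.range (m + 1), |F (m - j)| * |e j|
        = ∑ i ∈ Finset.range (m + 1), |F i| * |e (m - i)| := by
      have := Finset.sum_range_reflect (fun i => |F i| * |e (m - i)|) (m + 1)
      simp only [Nat.add_sub_cancel] at this
      rw [← this]
      refine Finset.sum_congr rfl fun j hj => ?_
      have hj' : j ≤ m := Nat.lt_succ_iff.mp (Finset.mem_range.mp hj)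
      rw [Nat.sub_sub_self hj']
    have hsplit : Finset.range (m + 1)
        = Finset.Ico 0 (m - N₀ + 1) ∪ Finset.Ico (m - N₀ + 1) (m + 1) := by
      rw [Finset.Ico_union_Ico_eq_Ico (Nat.zero_le _) (by omega)]
      rw [Finset.range_eq_Ico]
    calc |g m + ∑ j ∈ Finset.range (m + 1), F (m - j) * e j|
        ≤ |g m| + ∑ j ∈ Finset.range (m + 1), |F (m - j)| * |e j| := by
          refine le_trans (abs_add_le _ _) (add_le_add (le_refl _) ?_)
          refine le_trans (Finset.abs_sum_le_sum_abs _ _) ?_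
          refine le_of_eq (Finset.sum_congr rfl fun j _ => abs_mul _ _)
      _ = |g m| + ∑ i ∈ Finset.range (m + 1), |F i| * |e (m - i)| := by rw [hrefl]
      _ = |g m| + (∑ i ∈ Finset.Ico 0 (m - N₀ + 1), |F i| * |e (m - i)|
            + ∑ i ∈ Finset.Ico (m - N₀ + 1) (m + 1), |F i| * |e (m - i)|) := by
          rw [hsplit, Finset.sum_union]
          exact Finset.Ico_disjoint_Ico_consecutive _ _ _
      _ ≤ |g m| + ((∑ i ∈ Finset.Ico 0 (m - N₀ + 1), |F i|) * B
            + (∑ i ∈ Finset.Ico (m - N₀ + 1) (m + 1), |F i|) * M) := by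
          refine add_le_add (le_refl _) (add_le_add ?_ ?_)
          · rw [Finset.sum_mul]
            refine Finset.sum_le_sum fun i hi => ?_
            have hi' : i ≤ m - N₀ := by
              have := (Finset.mem_Ico.mp hi).2; omega
            have : N₀ ≤ m - i := by omega
            exact mul_le_mul_of_nonneg_left (hN₀ _ this) (abs_nonneg _)
          · rw [Finset.sum_mul]
            refine Finset.sum_le_sum fun i hi => ?_
            exact mul_le_mul_of_nonneg_left (hM _) (abs_nonneg _)
      _ ≤ |g m| + (ρ * B + M * T (m - N₀ + 1)) := by
          refine add_le_add (le_refl _) (add_le_add ?_ ?_)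
          · refine mul_le_mul_of_nonneg_right (hpar _) ?_
            exact le_trans (abs_nonneg (e (N₀ + 1))) (hN₀ _ (by omega))
          · rw [mul_comm M]
            exact mul_le_mul_of_nonneg_right (hTtail _ _) hM0
      _ ≤ ρ * B + δ := by
          have := hN₁ m hmN₁
          linarith
  -- iterate the contraction
  have Hiter : ∀ k : ℕ, ∀ δ : ℝ, 0 < δ → ∀ᶠ n in atTop, |e n| ≤ ρ ^ k * M + δ := by
    intro k
    induction k with
    | zero =>
      intro δ hδ
      exact Eventually.of_forall fun n => by
        have := hM n; simp; linarith
    | succ k ih =>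
      intro δ hδ
      have h1 := ih (δ / 2) (by linarith)
      have h2 := Hkey _ h1 (δ / 2) (by linarith)
      refine h2.mono fun n hn => ?_
      have hpk : 0 ≤ ρ ^ k * M := mul_nonneg (pow_nonneg hρ0 _) hM0
      calc |e n| ≤ ρ * (ρ ^ k * M + δ / 2) + δ / 2 := hn
        _ = ρ ^ (k + 1) * M + (ρ * (δ / 2) + δ / 2) := by ring
        _ ≤ ρ ^ (k + 1) * M + δ := by nlinarith
  -- conclude e → 0
  have he0 : Tendsto e atTop (nhds 0) := by
    rw [Metric.tendsto_atTop]
    intro ε hε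
    have hpow : Tendsto (fun k => ρ ^ k * M) atTop (nhds 0) := by
      simpa using (tendsto_pow_atTop_nhds_zero_of_lt_one hρ0 hρ1).mul_const M
    obtain ⟨k, hk⟩ := (Metric.tendsto_atTop.mp hpow (ε / 2) (by linarith)) 
    have hk' : ρ ^ k * M < ε / 2 := by
      have := hk k le_rfl
      rw [Real.dist_eq, sub_zero] at this
      exact lt_of_abs_lt this
    obtain ⟨N, hN⟩ := eventually_atTop.mp (Hiter k (ε / 4) (by linarith))
    refine ⟨N, fun n hn => ?_⟩
    rw [Real.dist_eq, sub_zero]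
    calc |e n| ≤ ρ ^ k * M + ε / 4 := hN n hn
      _ < ε := by linarith
  have : Tendsto (fun n => e n + L) atTop (nhds (0 + L)) :=
    he0.add tendsto_const_nhds
  simpa [hedef] using this
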